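/- With h, H, h₀ and the associated scalar quantities as in the context, define the (extrinsic) Ricci tensor Ric i k := 4·⟪H, h i k⟫ − (h²) i k and |Ric|² := ∑_{i,k} (Ric i k)². Then 4·|Ric|² = −2·|h²|² − 8·⟨H·h, h²⟩ + 6·|h₀²|² + 40·|H·h|² − 12·‖H‖²·|h|² + 72·‖H‖⁴. -/

import Mathlib

open scoped RealInnerProductSpace

/-- With the extrinsic Ricci tensor `Ric i k = 4⟪H, h i k⟫ − (h²) i k`, one has
`4|Ric|² = −2|h²|² − 8⟨H·h, h²⟩ + 6|h₀²|² + 40|H·h|² − 12‖H‖²|h|² + 72‖H‖⁴`. -/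
theorem stmt_2 {F : Type*} [NormedAddCommGroup F] [InnerProductSpace ℝ F]
    (h : Fin 4 → Fin 4 → F) (hsymm : ∀ i j, h i j = h j i)
    (H : F) (hH : H = (1 / 4 : ℝ) • ∑ i : Fin 4, h i i)
    (h₀ : Fin 4 → Fin 4 → F)
    (hh₀ : ∀ i j, h₀ i j = h i j - if i = j then H else 0)
    (h2 : Fin 4 → Fin 4 → ℝ)
    (hh2 : ∀ i j, h2 i j = ∑ k : Fin 4, ⟪h i k, h k j⟫)
    (Ric : Fin 4 → Fin 4 → ℝ)
    (hRic : ∀ i k, Ric i k = 4 * ⟪H, h i k⟫ - h2 i k) :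
    4 * (∑ i : Fin 4, ∑ k : Fin 4, Ric i k ^ 2)
      = -2 * (∑ i : Fin 4, ∑ j : Fin 4, h2 i j ^ 2)
        - 8 * (∑ i : Fin 4, ∑ j : Fin 4, ⟪H, h i j⟫ * h2 i j)
        + 6 * (∑ i : Fin 4, ∑ j : Fin 4, (∑ k : Fin 4, ⟪h₀ i k, h₀ k j⟫) ^ 2)
        + 40 * (∑ i : Fin 4, ∑ j : Fin 4, ⟪H, h i j⟫ ^ 2)
        - 12 * ‖H‖ ^ 2 * (∑ i : Fin 4, ∑ j : Fin 4, ‖h i j‖ ^ 2)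
        + 72 * ‖H‖ ^ 4 := by
  have hsum : ∑ i : Fin 4, h i i = (4 : ℝ) • H := by
    rw [hH, smul_smul]; norm_num
  have key : ∀ i j, (∑ k : Fin 4, ⟪h₀ i k, h₀ k j⟫)
      = h2 i j - 2 * ⟪H, h i j⟫ + (if i = j then ‖H‖ ^ 2 else 0) := by
    intro i j
    have e : ∀ k : Fin 4, ⟪h₀ i k, h₀ k j⟫
        = ⟪h i k, h k j⟫ - (if k = j then ⟪h i k, H⟫ else 0)
          - (if i = k then ⟪H, h k j⟫ else 0)
          + (if i = k then (if k = j then ‖H‖ ^ 2 else 0) else 0) := by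
      intro k
      rw [hh₀, hh₀]
      split_ifs <;>
        simp [inner_sub_left, inner_sub_right, real_inner_self_eq_norm_sq] <;> ring
    simp only [e, Finset.sum_add_distrib, Finset.sum_sub_distrib,
      Finset.sum_ite_eq, Finset.sum_ite_eq', Finset.mem_univ, if_true, hh2]
    rw [real_inner_comm (h i j) H]
    ring
  have trB : ⟪H, h 0 0⟫ + ⟪H, h 1 1⟫ + ⟪H, h 2 2⟫ + ⟪H, h 3 3⟫ = 4 * ‖H‖ ^ 2 := by
    have : ⟪H, ∑ i : Fin 4, h i i⟫ = ⟪H, (4:ℝ) • H⟫ := by rw [hsum]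
    simpa [Fin.sum_univ_four, inner_add_right, real_inner_smul_right,
      real_inner_self_eq_norm_sq] using this
  have trA : (∑ i : Fin 4, ∑ j : Fin 4, ‖h i j‖ ^ 2)
      = h2 0 0 + h2 1 1 + h2 2 2 + h2 3 3 := by
    have e : ∀ i j : Fin 4, ‖h i j‖ ^ 2 = ⟪h i j, h j i⟫ := by
      intro i j; rw [hsymm i j, real_inner_self_eq_norm_sq]
    simp only [e, hh2, Fin.sum_univ_four]
  rw [trA]
  simp only [hRic, key, Fin.sum_univ_four, show ((0:Fin 4) = 1) = False by simp, show ((0:Fin 4) = 2) = False by simp, show ((0:Fin 4) = 3) = False by simp, show ((1:Fin 4) = 0) = False by simp, show ((1:Fin 4) = 2) = False by simp, show ((1:Fin 4) = 3) = False by simp, show ((2:Fin 4) = 0) = False by simp, show ((2:Fin 4) = 1) = False by simp, show ((2:Fin 4) = 3) = False by simp, show ((3:Fin 4) = 0) = False by simp, show ((3:Fin 4) = 1) = False by simp, show ((3:Fin 4) = 2) = False by simp, if_false, if_true, add_zero]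
  linear_combination (24 * ‖H‖ ^ 2) * trB
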